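/- Let z̃ : ℝ² → ℝ be differentiable and strictly positive at (x, y), let f̃ > 0 and (x₀, y₀) ∈ ℝ², and let 𝐱(u, v) = z̃(u, v)·((u − x₀)/f̃, (v − y₀)/f̃, 1) be the perspective parameterization. Setting z = log ∘ z̃, x̃ = x − x₀, ỹ = y − y₀, one has ‖𝐱ₓ(x,y) × 𝐱_y(x,y)‖ = (z̃(x,y)²/f̃²) · √( f̃²·((∂ₓz(x,y))² + (∂_y z(x,y))²) + (1 + x̃·∂ₓz(x,y) + ỹ·∂_y z(x,y))² ). -/

import Mathlib

/-- Let `z̃ : ℝ² → ℝ` be differentiable and strictly positive at `(x, y)`,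
let `f̃ > 0` and `(x₀, y₀) ∈ ℝ²`, and let
`𝐱(u, v) = z̃(u, v)·((u − x₀)/f̃, (v − y₀)/f̃, 1)` be the perspective parameterization.
Setting `z = log ∘ z̃`, `x̃ = x − x₀`, `ỹ = y − y₀`, one has
`‖𝐱ₓ × 𝐱_y‖ = (z̃(x,y)²/f̃²)·√(f̃²·((∂ₓz)² + (∂_y z)²) + (1 + x̃·∂ₓz + ỹ·∂_y z)²)`.
(Here `zt = z̃`, `ft = f̃`, `xt = x̃`, `yt = ỹ`.) -/
theorem perspective_area_element (zt : ℝ × ℝ → ℝ) (x y x₀ y₀ ft : ℝ) (hft : 0 < ft)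
    (hz : DifferentiableAt ℝ zt (x, y)) (hpos : 0 < zt (x, y))
    (X : ℝ × ℝ → EuclideanSpace ℝ (Fin 3))
    (hX : X = fun p => (WithLp.equiv 2 (Fin 3 → ℝ)).symm
      ![zt p * ((p.1 - x₀) / ft), zt p * ((p.2 - y₀) / ft), zt p])
    (z : ℝ × ℝ → ℝ) (hzdef : z = Real.log ∘ zt)
    (zx zy : ℝ) (hzx : zx = fderiv ℝ z (x, y) (1, 0)) (hzy : zy = fderiv ℝ z (x, y) (0, 1))
    (xt yt : ℝ) (hxt : xt = x - x₀) (hyt : yt = y - y₀) :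
    ‖(WithLp.equiv 2 (Fin 3 → ℝ)).symm
        (crossProduct (fderiv ℝ X (x, y) (1, 0)) (fderiv ℝ X (x, y) (0, 1)))‖ =
      (zt (x, y) ^ 2 / ft ^ 2) *
        Real.sqrt (ft ^ 2 * (zx ^ 2 + zy ^ 2) + (1 + xt * zx + yt * zy) ^ 2) := by
  have hftne : ft ≠ 0 := ne_of_gt hft
  -- component functions
  set φ : Fin 3 → (ℝ × ℝ → ℝ) :=
    ![fun p => zt p * ((p.1 - x₀) / ft), fun p => zt p * ((p.2 - y₀) / ft), fun p => zt p]
    with hφ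
  -- derivatives of the affine parts
  have h1 : HasFDerivAt (fun p : ℝ × ℝ => (p.1 - x₀) / ft)
      (ft⁻¹ • (ContinuousLinearMap.fst ℝ ℝ ℝ)) (x, y) := by
    simp only [div_eq_mul_inv]
    simpa using ((hasFDerivAt_fst (𝕜 := ℝ) (p := ((x:ℝ), (y:ℝ)))).sub_const x₀).mul_const ft⁻¹
  have h2 : HasFDerivAt (fun p : ℝ × ℝ => (p.2 - y₀) / ft)
      (ft⁻¹ • (ContinuousLinearMap.snd ℝ ℝ ℝ)) (x, y) := by
    simp only [div_eq_mul_inv]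
    simpa using ((hasFDerivAt_snd (𝕜 := ℝ) (p := ((x:ℝ), (y:ℝ)))).sub_const y₀).mul_const ft⁻¹
  have hφdiff : ∀ i, DifferentiableAt ℝ (φ i) (x, y) := by
    intro i
    fin_cases i
    · exact hz.mul h1.differentiableAt
    · exact hz.mul h2.differentiableAt
    · exact hz
  -- fderiv of X
  have hXeq : X = ⇑(EuclideanSpace.equiv (Fin 3) ℝ).symm ∘ (fun p i => φ i p) := by
    funext p
    rw [hX]
    show (WithLp.equiv 2 (Fin 3 → ℝ)).symm _ = (WithLp.equiv 2 (Fin 3 → ℝ)).symm _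
    congr 1
    funext i
    fin_cases i <;> rfl
  have hDX : fderiv ℝ X (x, y) =
      ((EuclideanSpace.equiv (Fin 3) ℝ).symm : (Fin 3 → ℝ) →L[ℝ] EuclideanSpace ℝ (Fin 3)).comp
        (ContinuousLinearMap.pi fun i => fderiv ℝ (φ i) (x, y)) := by
    rw [hXeq, ContinuousLinearEquiv.comp_fderiv, fderiv_pi hφdiff]
  -- abbreviations
  set a1 := fderiv ℝ zt (x, y) (1, 0) with ha1
  set a2 := fderiv ℝ zt (x, y) (0, 1) with ha2
  have hzx' : zx = (zt (x, y))⁻¹ * a1 := by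
    rw [hzx, hzdef, show Real.log ∘ zt = fun p => Real.log (zt p) from rfl,
      (hz.hasFDerivAt.log (ne_of_gt hpos)).fderiv]
    simp [ha1]
  have hzy' : zy = (zt (x, y))⁻¹ * a2 := by
    rw [hzy, hzdef, show Real.log ∘ zt = fun p => Real.log (zt p) from rfl,
      (hz.hasFDerivAt.log (ne_of_gt hpos)).fderiv]
    simp [ha2]
  have hA1 : a1 = zt (x, y) * zx := by
    rw [hzx']; field_simp
  have hA2 : a2 = zt (x, y) * zy := by
    rw [hzy']; field_simp
  -- fderivs of the components
  have hf0 : fderiv ℝ (fun p : ℝ × ℝ => zt p * ((p.1 - x₀) / ft)) (x, y) = _ := (hz.hasFDerivAt.mul h1).fderiv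
  have hf1 : fderiv ℝ (fun p : ℝ × ℝ => zt p * ((p.2 - y₀) / ft)) (x, y) = _ := (hz.hasFDerivAt.mul h2).fderiv
  have hu : fderiv ℝ X (x, y) (1, 0) = (WithLp.equiv 2 (Fin 3 → ℝ)).symm
      ![a1 * ((x - x₀)/ft) + zt (x, y)/ft, a1 * ((y - y₀)/ft), a1] := by
    rw [hDX]
    refine congrArg (WithLp.equiv 2 (Fin 3 → ℝ)).symm ?_
    funext i
    fin_cases i
    · show fderiv ℝ (fun p : ℝ × ℝ => zt p * ((p.1 - x₀) / ft)) (x, y) (1, 0)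
        = a1 * ((x - x₀) / ft) + zt (x, y) / ft
      rw [hf0]; simp [div_eq_mul_inv]; ring
    · show fderiv ℝ (fun p : ℝ × ℝ => zt p * ((p.2 - y₀) / ft)) (x, y) (1, 0)
        = a1 * ((y - y₀) / ft)
      rw [hf1]; simp [div_eq_mul_inv]; rw [← ha1]; ring
    · show fderiv ℝ zt (x, y) (1, 0) = a1
      rfl
  have hv : fderiv ℝ X (x, y) (0, 1) = (WithLp.equiv 2 (Fin 3 → ℝ)).symm
      ![a2 * ((x - x₀)/ft), a2 * ((y - y₀)/ft) + zt (x, y)/ft, a2] := by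
    rw [hDX]
    refine congrArg (WithLp.equiv 2 (Fin 3 → ℝ)).symm ?_
    funext i
    fin_cases i
    · show fderiv ℝ (fun p : ℝ × ℝ => zt p * ((p.1 - x₀) / ft)) (x, y) (0, 1)
        = a2 * ((x - x₀) / ft)
      rw [hf0]; simp [div_eq_mul_inv]; rw [← ha2]; ring
    · show fderiv ℝ (fun p : ℝ × ℝ => zt p * ((p.2 - y₀) / ft)) (x, y) (0, 1)
        = a2 * ((y - y₀) / ft) + zt (x, y) / ft
      rw [hf1]; simp [div_eq_mul_inv]; ring
    · show fderiv ℝ zt (x, y) (0, 1) = a2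
      rfl
  rw [hu, hv]
  -- compute the cross product
  have hc : crossProduct
      ((WithLp.equiv 2 (Fin 3 → ℝ)).symm ![a1 * ((x - x₀)/ft) + zt (x, y)/ft, a1 * ((y - y₀)/ft), a1])
      ((WithLp.equiv 2 (Fin 3 → ℝ)).symm ![a2 * ((x - x₀)/ft), a2 * ((y - y₀)/ft) + zt (x, y)/ft, a2])
      = ![-(a1 * (zt (x, y)/ft)), -(a2 * (zt (x, y)/ft)),
          (zt (x, y)/ft) * (a1 * ((x - x₀)/ft) + a2 * ((y - y₀)/ft) + zt (x, y)/ft)] := by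
    funext i
    fin_cases i <;> simp [crossProduct] <;> ring
  rw [hc, EuclideanSpace.norm_eq]
  simp only [WithLp.equiv_symm_apply, PiLp.toLp_apply, Fin.sum_univ_three, Real.norm_eq_abs, sq_abs,
    Matrix.cons_val_zero, Matrix.cons_val_one, Matrix.head_cons, Matrix.cons_val_two,
    Matrix.tail_cons]
  rw [hA1, hA2, ← hxt, ← hyt]
  have hq : (0:ℝ) ≤ zt (x, y) ^ 2 / ft ^ 2 := by positivity
  rw [show (-(zt (x, y) * zx * (zt (x, y)/ft)))^2 + (-(zt (x, y) * zy * (zt (x, y)/ft)))^2 +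
      ((zt (x, y)/ft) * (zt (x, y) * zx * (xt/ft) + zt (x, y) * zy * (yt/ft) + zt (x, y)/ft))^2
    = (zt (x, y) ^ 2 / ft ^ 2)^2 * (ft ^ 2 * (zx ^ 2 + zy ^ 2) + (1 + xt * zx + yt * zy) ^ 2) by
      field_simp; ring]
  rw [Real.sqrt_mul (sq_nonneg _), Real.sqrt_sq hq]
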